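/- arXiv:2505.07268 — 3 statements merged into one kernel-verified Lean document; each statement's English description precedes it below -/
import Mathlib

section
/- Let G be a connected cograph (a connected P4-free graph) and let X, Y ⊆ V(G) be connected vertex subsets with |X| = |Y|. Then the shortest distance d_CS(X, Y) between X and Y under the component sliding rule CS equals 0 if X = Y; equals 1 if X ≠ Y and X touches Y (i.e., X ∪ Y induces a connected subgraph); and equals 2 if X does not touch Y. In particular X and Y are always reconfigurable under CS. -/
open scoped Classical

noncomputable section

/-- `U` induces a connected subgraph of `G`. -/
def IsConnSub {V : Type*} (G : SimpleGraph V) (U : Finset V) : Prop :=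
  (G.induce (U : Set V)).Connected

/-- The set of connected components of a vertex subset `U`:
maximal subsets of `U` inducing connected subgraphs. -/
def comps {V : Type*} [Fintype V] [DecidableEq V] (G : SimpleGraph V) (U : Finset V) :
    Finset (Finset V) :=
  Finset.univ.filter (fun C => C ⊆ U ∧ IsConnSub G C ∧
    ∀ D : Finset V, C ⊆ D → D ⊆ U → IsConnSub G D → D = C)

/-- The CC-multiset of `U`: the multiset of sizes of connected components of `U`. -/
def ccMultiset {V : Type*} [Fintype V] [DecidableEq V] (G : SimpleGraph V) (U : Finset V) :
    Multiset ℕ :=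
  (comps G U).val.map Finset.card

/-- Adjacency under component jumping (CJ). -/
def adjCJ {V : Type*} [Fintype V] [DecidableEq V] (G : SimpleGraph V) (U U' : Finset V) : Prop :=
  ccMultiset G U = ccMultiset G U' ∧
  (comps G U \ comps G U').card = 1 ∧ (comps G U' \ comps G U).card = 1

/-- Adjacency under component sliding (CS). -/
def adjCS {V : Type*} [Fintype V] [DecidableEq V] (G : SimpleGraph V) (U U' : Finset V) : Prop :=
  adjCJ G U U' ∧
  ∀ C ∈ comps G U \ comps G U', ∀ C' ∈ comps G U' \ comps G U, IsConnSub G (C ∪ C')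

/-- Adjacency under CS1 (component sliding by one vertex). -/
def adjCS1 {V : Type*} [Fintype V] [DecidableEq V] (G : SimpleGraph V) (U U' : Finset V) : Prop :=
  adjCS G U U' ∧
  ∀ C ∈ comps G U \ comps G U', ∀ C' ∈ comps G U' \ comps G U,
    (C \ C').card = 1 ∧ (C' \ C).card = 1

/-- Adjacency under token jumping (TJ). -/
def adjTJ {V : Type*} [DecidableEq V] (G : SimpleGraph V) (U U' : Finset V) : Prop :=
  (U \ U').card = 1 ∧ (U' \ U).card = 1

/-- `A` and `B` are reconfigurable under rule `R` keeping the CC-multiset equal to `M`. -/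
def Reconf {V : Type*} [Fintype V] [DecidableEq V] (G : SimpleGraph V) (M : Multiset ℕ)
    (R : Finset V → Finset V → Prop) (A B : Finset V) : Prop :=
  ∃ (ℓ : ℕ) (W : ℕ → Finset V), W 0 = A ∧ W ℓ = B ∧
    (∀ i ≤ ℓ, ccMultiset G (W i) = M) ∧ ∀ i < ℓ, R (W i) (W (i + 1))

end

/-- `G` is P4-free (a cograph): it contains no induced path on four vertices. -/
def P4Free {V : Type*} (G : SimpleGraph V) : Prop :=
  ¬ ∃ a b c d : V, a ≠ b ∧ a ≠ c ∧ a ≠ d ∧ b ≠ c ∧ b ≠ d ∧ c ≠ d ∧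
    G.Adj a b ∧ G.Adj b c ∧ G.Adj c d ∧ ¬ G.Adj a c ∧ ¬ G.Adj a d ∧ ¬ G.Adj b d

/-- `X` touches `Y`: `X ∪ Y` induces a connected subgraph. -/
def Touches {V : Type*} [DecidableEq V] (G : SimpleGraph V) (X Y : Finset V) : Prop :=
  IsConnSub G (X ∪ Y)

/-- Adjacency under CS between two single connected vertex subsets of equal size:
they differ and their union induces a connected subgraph. -/
def adjCSconn {V : Type*} [DecidableEq V] (G : SimpleGraph V) (U U' : Finset V) : Prop :=
  U ≠ U' ∧ IsConnSub G (U ∪ U')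

/-- Adjacency under CS1 between two single connected vertex subsets of equal size:
CS-adjacent and they exchange exactly one vertex. -/
def adjCS1conn {V : Type*} [DecidableEq V] (G : SimpleGraph V) (U U' : Finset V) : Prop :=
  adjCSconn G U U' ∧ (U \ U').card = 1 ∧ (U' \ U).card = 1

/-- The set of lengths of reconfiguration sequences of connected vertex subsets of size
`|X|` from `X` to `Y` with consecutive subsets adjacent under `R`; its infimum is the
shortest distance `d_R(X, Y)`. -/
def connSeqLengths {V : Type*} (G : SimpleGraph V) (R : Finset V → Finset V → Prop)
    (X Y : Finset V) : Set ℕ :=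
  {ℓ | ∃ W : ℕ → Finset V, W 0 = X ∧ W ℓ = Y ∧
    (∀ i ≤ ℓ, IsConnSub G (W i) ∧ (W i).card = X.card) ∧
    ∀ i < ℓ, R (W i) (W (i + 1))}

namespace Stmt7Aux

variable {V : Type*} (G : SimpleGraph V)

def rel (U : Finset V) (a b : V) : Prop := a ∈ U ∧ b ∈ U ∧ G.Adj a b

lemma rel_symm (U : Finset V) : Symmetric (rel G U) :=
  fun _ _ h => ⟨h.2.1, h.1, h.2.2.symm⟩

lemma walk_rtg {U : Finset V} {p q : (U : Set V)}
    (w : (G.induce (U : Set V)).Walk p q) :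
    Relation.ReflTransGen (rel G U) p.val q.val := by
  induction w with
  | nil => exact Relation.ReflTransGen.refl
  | @cons a b c h _ ih =>
    exact Relation.ReflTransGen.head ⟨Finset.mem_coe.mp a.2, Finset.mem_coe.mp b.2, h⟩ ih

lemma rtg_reachable {U : Finset V} {a b : V}
    (h : Relation.ReflTransGen (rel G U) a b) :
    ∀ (ha : a ∈ (U : Set V)) (hb : b ∈ (U : Set V)),
      (G.induce (U : Set V)).Reachable ⟨a, ha⟩ ⟨b, hb⟩ := by
  induction h with
  | refl => intro ha hb; exact SimpleGraph.Reachable.refl _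
  | @tail c d hac hstep ih =>
    intro ha hb
    exact (ih ha (by simpa using hstep.1)).trans
      (SimpleGraph.Adj.reachable (by simpa using hstep.2.2))

lemma isConnSub_iff (U : Finset V) :
    IsConnSub G U ↔ U.Nonempty ∧
      ∀ a ∈ U, ∀ b ∈ U, Relation.ReflTransGen (rel G U) a b := by
  constructor
  · intro h
    have hne : U.Nonempty := by
      obtain ⟨⟨x, hx⟩⟩ := h.nonempty
      exact ⟨x, by simpa using hx⟩
    refine ⟨hne, fun a ha b hb => ?_⟩
    obtain ⟨w⟩ := h.preconnected ⟨a, by simpa using ha⟩ ⟨b, by simpa using hb⟩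
    exact walk_rtg G w
  · rintro ⟨⟨x, hx⟩, hchain⟩
    unfold IsConnSub
    rw [SimpleGraph.connected_iff]
    refine ⟨fun p q => ?_, ⟨⟨x, by simpa using hx⟩⟩⟩
    have := rtg_reachable G
      (hchain p.val (by simpa using p.2) q.val (by simpa using q.2)) p.2 q.2
    simpa using this

lemma connSub_nonempty {U : Finset V} (h : IsConnSub G U) : U.Nonempty :=
  ((isConnSub_iff G U).1 h).1

lemma connSingleton (v : V) : IsConnSub G {v} := by
  rw [isConnSub_iff]
  refine ⟨⟨v, Finset.mem_singleton_self v⟩, fun a ha b hb => ?_⟩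
  rw [Finset.mem_singleton] at ha hb
  subst ha; subst hb
  exact Relation.ReflTransGen.refl

lemma connUnion [DecidableEq V] {A B : Finset V} (hA : IsConnSub G A)
    (hB : IsConnSub G B) {a b : V} (ha : a ∈ A) (hb : b ∈ B)
    (hab : a = b ∨ G.Adj a b) : IsConnSub G (A ∪ B) := by
  rw [isConnSub_iff] at hA hB ⊢
  obtain ⟨_, hAc⟩ := hA
  obtain ⟨_, hBc⟩ := hB
  refine ⟨⟨a, Finset.mem_union_left _ ha⟩, ?_⟩
  have monoA : ∀ {x y : V}, Relation.ReflTransGen (rel G A) x y →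
      Relation.ReflTransGen (rel G (A ∪ B)) x y := fun h =>
    Relation.ReflTransGen.mono (fun x y hxy =>
      ⟨Finset.mem_union_left _ hxy.1, Finset.mem_union_left _ hxy.2.1, hxy.2.2⟩) _ _ h
  have monoB : ∀ {x y : V}, Relation.ReflTransGen (rel G B) x y →
      Relation.ReflTransGen (rel G (A ∪ B)) x y := fun h =>
    Relation.ReflTransGen.mono (fun x y hxy =>
      ⟨Finset.mem_union_right _ hxy.1, Finset.mem_union_right _ hxy.2.1, hxy.2.2⟩) _ _ h
  have bridge : Relation.ReflTransGen (rel G (A ∪ B)) a b := by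
    rcases hab with rfl | h
    · exact Relation.ReflTransGen.refl
    · exact Relation.ReflTransGen.single
        ⟨Finset.mem_union_left _ ha, Finset.mem_union_right _ hb, h⟩
  have hsymm : ∀ {x y : V}, Relation.ReflTransGen (rel G (A ∪ B)) x y →
      Relation.ReflTransGen (rel G (A ∪ B)) y x := by
    intro x y h
    haveI : Std.Symm (rel G (A ∪ B)) := ⟨fun a b h => rel_symm G (A ∪ B) h⟩
    exact Std.Symm.symm _ _ h
  have key : ∀ x ∈ A ∪ B, Relation.ReflTransGen (rel G (A ∪ B)) x a := by
    intro x hx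
    rcases Finset.mem_union.1 hx with h | h
    · exact monoA (hAc x h a ha)
    · exact (monoB (hBc x h b hb)).trans (hsymm bridge)
  intro p hp q hq
  exact (key p hp).trans (hsymm (key q hq))

lemma connInsert [DecidableEq V] {U : Finset V} (hU : IsConnSub G U) {u v : V}
    (hu : u ∈ U) (h : G.Adj v u) : IsConnSub G (insert v U) := by
  have := connUnion G (connSingleton G v) hU (Finset.mem_singleton_self v) hu (Or.inr h)
  rwa [Finset.insert_eq]

lemma boundary [DecidableEq V] {S Z : Finset V} (hS : IsConnSub G S)
    (hZS : Z ⊆ S) (hZ : Z.Nonempty) (hne : Z ≠ S) :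
    ∃ u ∈ S, u ∉ Z ∧ ∃ z ∈ Z, G.Adj u z := by
  obtain ⟨z0, hz0⟩ := hZ
  have hex : ∃ u ∈ S, u ∉ Z := by
    by_contra h
    push_neg at h
    exact hne (Finset.Subset.antisymm hZS h)
  obtain ⟨u0, hu0S, hu0Z⟩ := hex
  have hchain := ((isConnSub_iff G S).1 hS).2 u0 hu0S z0 (hZS hz0)
  have H : ∀ {a : V}, Relation.ReflTransGen (rel G S) a z0 → a ∉ Z →
      ∃ u ∈ S, u ∉ Z ∧ ∃ z ∈ Z, G.Adj u z := by
    intro a h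
    induction h using Relation.ReflTransGen.head_induction_on with
    | refl => intro hz; exact absurd hz0 hz
    | @head a c hstep _ ih =>
      intro haZ
      by_cases hc : c ∈ Z
      · exact ⟨a, hstep.1, haZ, c, hc, hstep.2.2⟩
      · exact ih hc
  exact H hchain hu0Z

lemma growth [DecidableEq V] {S : Finset V} (hS : IsConnSub G S) {v : V}
    (hv : v ∈ S) : ∀ k, 1 ≤ k → k ≤ S.card →
      ∃ Z : Finset V, Z ⊆ S ∧ v ∈ Z ∧ Z.card = k ∧ IsConnSub G Z := by
  intro k
  induction k with
  | zero => omega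
  | succ n ih =>
    intro _ hcard
    by_cases hn : n = 0
    · subst hn
      exact ⟨{v}, Finset.singleton_subset_iff.2 hv, Finset.mem_singleton_self v,
        Finset.card_singleton v, connSingleton G v⟩
    · obtain ⟨Z, hZS, hvZ, hcardZ, hZc⟩ := ih (by omega) (by omega)
      have hne : Z ≠ S := by
        intro h
        subst h
        omega
      obtain ⟨u, huS, huZ, z, hzZ, hadj⟩ := boundary G hS hZS ⟨v, hvZ⟩ hne
      exact ⟨insert u Z, Finset.insert_subset huS hZS, Finset.mem_insert_of_mem hvZ,
        by rw [Finset.card_insert_of_notMem huZ, hcardZ], connInsert G hZc hzZ hadj⟩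

lemma cograph_dist2 (hconn : G.Connected)
    (hP4 : ¬ ∃ a b c d : V, a ≠ b ∧ a ≠ c ∧ a ≠ d ∧ b ≠ c ∧ b ≠ d ∧ c ≠ d ∧
      G.Adj a b ∧ G.Adj b c ∧ G.Adj c d ∧ ¬ G.Adj a c ∧ ¬ G.Adj a d ∧ ¬ G.Adj b d)
    (x y : V) : x = y ∨ G.Adj x y ∨ ∃ z, G.Adj x z ∧ G.Adj z y := by
  obtain ⟨w⟩ := hconn.preconnected x y
  induction w with
  | nil => exact Or.inl rfl
  | @cons x b y h p ih =>
    rcases ih with rfl | hby | ⟨z, hbz, hzy⟩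
    · exact Or.inr (Or.inl h)
    · exact Or.inr (Or.inr ⟨b, h, hby⟩)
    · by_cases h1 : x = y
      · exact Or.inl h1
      by_cases h2 : G.Adj x y
      · exact Or.inr (Or.inl h2)
      by_cases h3 : x = z
      · exact Or.inr (Or.inl (h3 ▸ hzy))
      by_cases h4 : G.Adj x z
      · exact Or.inr (Or.inr ⟨z, h4, hzy⟩)
      by_cases h5 : b = y
      · exact Or.inr (Or.inl (h5 ▸ h))
      by_cases h6 : G.Adj b y
      · exact Or.inr (Or.inr ⟨b, h, h6⟩)
      exact absurd ⟨x, b, z, y, h.ne, h3, h1, hbz.ne, h5, hzy.ne, h, hbz, hzy, h4, h2, h6⟩ hP4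

end Stmt7Aux

/-- In a connected cograph, for connected subsets `X`, `Y` of equal size,
the CS-distance is `0` if `X = Y`, `1` if `X ≠ Y` and `X` touches `Y`, and `2`
otherwise; in particular `X` and `Y` are always reconfigurable under CS. -/
theorem stmt7 {V : Type*} [Fintype V] [DecidableEq V] (G : SimpleGraph V)
    (hconn : G.Connected) (hP4 : P4Free G) (X Y : Finset V)
    (hX : IsConnSub G X) (hY : IsConnSub G Y) (hcard : X.card = Y.card) :
    (connSeqLengths G (adjCSconn G) X Y).Nonempty ∧
    sInf (connSeqLengths G (adjCSconn G) X Y) =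
      (if X = Y then 0 else if Touches G X Y then 1 else 2) := by
  by_cases hXY : X = Y
  · subst hXY
    have h0 : 0 ∈ connSeqLengths G (adjCSconn G) X X :=
      ⟨fun _ => X, rfl, rfl, fun i _ => ⟨hX, rfl⟩, fun i hi => absurd hi (Nat.not_lt_zero i)⟩
    refine ⟨⟨0, h0⟩, ?_⟩
    rw [if_pos rfl]
    exact Nat.sInf_eq_zero.mpr (Or.inl h0)
  · have h0not : 0 ∉ connSeqLengths G (adjCSconn G) X Y := by
      rintro ⟨W, hW0, hWl, -, -⟩
      exact hXY (hW0 ▸ hWl)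
    by_cases hT : Touches G X Y
    · have h1 : 1 ∈ connSeqLengths G (adjCSconn G) X Y := by
        refine ⟨fun i => if i = 0 then X else Y, by simp, by simp, ?_, ?_⟩
        · intro i hi
          interval_cases i
          · have h' : IsConnSub G X ∧ X.card = X.card := ⟨hX, rfl⟩
            simpa using h'
          · have h' : IsConnSub G Y ∧ Y.card = X.card := ⟨hY, hcard.symm⟩
            simpa using h'
        · intro i hi
          interval_cases i
          have h' : adjCSconn G X Y := ⟨hXY, hT⟩
          simpa using h'
      refine ⟨⟨1, h1⟩, ?_⟩
      rw [if_neg hXY, if_pos hT]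
      have hle := Nat.sInf_le h1
      have hmem := Nat.sInf_mem (⟨1, h1⟩ : (connSeqLengths G (adjCSconn G) X Y).Nonempty)
      have hne0 : sInf (connSeqLengths G (adjCSconn G) X Y) ≠ 0 := by
        intro h
        exact h0not (h ▸ hmem)
      omega
    · -- X and Y do not touch
      have h1not : 1 ∉ connSeqLengths G (adjCSconn G) X Y := by
        rintro ⟨W, hW0, hWl, -, hadj⟩
        have := hadj 0 (by omega)
        rw [hW0, hWl] at this
        exact hT this.2
      obtain ⟨x, hx⟩ := Stmt7Aux.connSub_nonempty G hX
      obtain ⟨y, hy⟩ := Stmt7Aux.connSub_nonempty G hY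
      have hdisj : ∀ v, v ∈ X → v ∈ Y → False := fun v hvX hvY =>
        hT (Stmt7Aux.connUnion G hX hY hvX hvY (Or.inl rfl))
      rcases Stmt7Aux.cograph_dist2 G hconn hP4 x y with heq | hadj | ⟨v, hxv, hvy⟩
      · exact absurd (heq ▸ hy) (fun h => hdisj x hx h)
      · exact absurd (Stmt7Aux.connUnion G hX hY hx hy (Or.inr hadj)) hT
      · have hvX : v ∉ X := fun h =>
          hT (Stmt7Aux.connUnion G hX hY h hy (Or.inr hvy))
        have hvY : v ∉ Y := fun h =>
          hT (Stmt7Aux.connUnion G hX hY hx h (Or.inr hxv))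
        have hS : IsConnSub G (insert v X) := Stmt7Aux.connInsert G hX hx hxv.symm
        have hScard : (insert v X).card = X.card + 1 := Finset.card_insert_of_notMem hvX
        have hXpos : 1 ≤ X.card := Finset.card_pos.mpr ⟨x, hx⟩
        obtain ⟨Z, hZS, hvZ, hZcard, hZconn⟩ :=
          Stmt7Aux.growth G hS (Finset.mem_insert_self v X) X.card hXpos (by omega)
        have hXZ : X ∪ Z = insert v X := by
          apply Finset.Subset.antisymm
          · exact Finset.union_subset (Finset.subset_insert _ _) hZS
          · exact Finset.insert_subset (Finset.mem_union_right _ hvZ)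
              Finset.subset_union_left
        have hconnXZ : IsConnSub G (X ∪ Z) := hXZ ▸ hS
        have hconnZY : IsConnSub G (Z ∪ Y) :=
          Stmt7Aux.connUnion G hZconn hY hvZ hy (Or.inr hvy)
        have hXneZ : X ≠ Z := fun h => hvX (h ▸ hvZ)
        have hZneY : Z ≠ Y := fun h => hvY (h ▸ hvZ)
        have h2 : 2 ∈ connSeqLengths G (adjCSconn G) X Y := by
          refine ⟨fun i => if i = 0 then X else if i = 1 then Z else Y,
            by simp, by simp, ?_, ?_⟩
          · intro i hi
            interval_cases i
            · have h' : IsConnSub G X ∧ X.card = X.card := ⟨hX, rfl⟩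
              simpa using h'
            · have h' : IsConnSub G Z ∧ Z.card = X.card := ⟨hZconn, hZcard⟩
              simpa using h'
            · have h' : IsConnSub G Y ∧ Y.card = X.card := ⟨hY, hcard.symm⟩
              simpa using h'
          · intro i hi
            interval_cases i
            · have h' : adjCSconn G X Z := ⟨hXneZ, hconnXZ⟩
              simpa using h'
            · have h' : adjCSconn G Z Y := ⟨hZneY, hconnZY⟩
              simpa using h'
        refine ⟨⟨2, h2⟩, ?_⟩
        rw [if_neg hXY, if_neg hT]
        have hle := Nat.sInf_le h2
        have hmem := Nat.sInf_mem (⟨2, h2⟩ : (connSeqLengths G (adjCSconn G) X Y).Nonempty)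
        have hne0 : sInf (connSeqLengths G (adjCSconn G) X Y) ≠ 0 := fun h =>
          h0not (h ▸ hmem)
        have hne1 : sInf (connSeqLengths G (adjCSconn G) X Y) ≠ 1 := fun h =>
          h1not (h ▸ hmem)
        omega
end

section
/- Let G be a connected cograph (connected P4-free graph) and let X, Y ⊆ V(G) be nonempty connected vertex subsets such that X does not touch Y (i.e., X ∪ Y does not induce a connected subgraph; in particular X ∩ Y = ∅ and no edge joins X and Y). Then there exists a vertex z ∈ V(G) \ (X ∪ Y) that has a neighbor in X and a neighbor in Y. -/
open scoped Classical

section Aux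

variable {V : Type*} {G : SimpleGraph V}

/-- Reachability in an induced subgraph lifts to a larger induced subgraph. -/
lemma reach_mono {s t : Set V} (h : s ⊆ t) {a b : V} (ha : a ∈ s) (hb : b ∈ s)
    (hr : (G.induce s).Reachable ⟨a, ha⟩ ⟨b, hb⟩) :
    (G.induce t).Reachable ⟨a, h ha⟩ ⟨b, h hb⟩ := by
  have := hr.map (G.induceHomOfLE h).toHom
  exact this

/-- If two connected finsets share a vertex or are joined by an edge, their union is
connected. -/
lemma touches_of_close [DecidableEq V] {X Y : Finset V}
    (hX : IsConnSub G X) (hY : IsConnSub G Y) {x y : V} (hx : x ∈ X) (hy : y ∈ Y)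
    (hclose : x = y ∨ G.Adj x y) : Touches G X Y := by
  have hXsub : (X : Set V) ⊆ ((X ∪ Y : Finset V) : Set V) := by
    intro v hv; simp at hv ⊢; exact Or.inl hv
  have hYsub : (Y : Set V) ⊆ ((X ∪ Y : Finset V) : Set V) := by
    intro v hv; simp at hv ⊢; exact Or.inr hv
  show (G.induce ((X ∪ Y : Finset V) : Set V)).Connected
  rw [SimpleGraph.connected_iff]
  refine ⟨?_, ?_⟩
  · rintro ⟨a, haU⟩ ⟨b, hbU⟩
    have key : ∀ c : V, ∀ hc : c ∈ ((X ∪ Y : Finset V) : Set V),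
        (G.induce ((X ∪ Y : Finset V) : Set V)).Reachable ⟨c, hc⟩
          ⟨x, hXsub hx⟩ := by
      intro c hc
      have hc' : c ∈ X ∨ c ∈ Y := by simpa using hc
      rcases hc' with hcX | hcY
      · exact reach_mono hXsub hcX hx (hX.preconnected _ _)
      · have hr1 : (G.induce ((X ∪ Y : Finset V) : Set V)).Reachable ⟨c, hc⟩
            ⟨y, hYsub hy⟩ := reach_mono hYsub hcY hy (hY.preconnected _ _)
        rcases hclose with rfl | hadj
        · exact hr1
        · refine hr1.trans (SimpleGraph.Adj.reachable ?_).symm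
          exact hadj
    exact (key a haU).trans (key b hbU).symm
  · exact ⟨⟨x, hXsub hx⟩⟩

/-- Distance from the start of a walk to its `i`-th vertex is at most `i`. -/
lemma dist_getVert_le (hconn : G.Connected) {u v : V} (p : G.Walk u v) (i : ℕ) :
    G.dist u (p.getVert i) ≤ i := by
  induction p generalizing i with
  | nil => simp [SimpleGraph.Walk.getVert, SimpleGraph.dist_self]
  | cons h q ih =>
    cases i with
    | zero => simp [SimpleGraph.Walk.getVert, SimpleGraph.dist_self]
    | succ n =>
      rw [SimpleGraph.Walk.getVert_cons_succ]
      calc G.dist _ _ ≤ G.dist _ _ + G.dist _ (q.getVert n) := hconn.dist_triangle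
        _ ≤ 1 + n := by
            gcongr
            · exact le_of_eq (SimpleGraph.dist_eq_one_iff_adj.mpr h)
            · exact ih n
        _ = n + 1 := by omega

lemma dist_getVert_le' (hconn : G.Connected) {u v : V} (p : G.Walk u v) {i : ℕ}
    (hi : i ≤ p.length) : G.dist (p.getVert i) v ≤ p.length - i := by
  have := dist_getVert_le hconn p.reverse (p.length - i)
  rw [SimpleGraph.Walk.getVert_reverse] at this
  have h2 : p.length - (p.length - i) = i := by omega
  rw [h2] at this
  rwa [SimpleGraph.dist_comm]

end Aux

/-- In a connected cograph, if nonempty connected subsets `X` and `Y`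
do not touch, then some vertex outside `X ∪ Y` has a neighbor in `X` and a neighbor
in `Y`. -/
theorem stmt9 {V : Type*} [Fintype V] [DecidableEq V] (G : SimpleGraph V)
    (hconn : G.Connected) (hP4 : P4Free G) (X Y : Finset V)
    (hXne : X.Nonempty) (hYne : Y.Nonempty)
    (hX : IsConnSub G X) (hY : IsConnSub G Y)
    (hnt : ¬ Touches G X Y) :
    ∃ z : V, z ∉ X ∪ Y ∧ (∃ x ∈ X, G.Adj z x) ∧ (∃ y ∈ Y, G.Adj z y) := by
  -- no vertex pair across X, Y is equal or adjacent
  have hfar : ∀ x ∈ X, ∀ y ∈ Y, x ≠ y ∧ ¬ G.Adj x y := by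
    intro x hx y hy
    constructor
    · intro h; exact hnt (touches_of_close hX hY hx hy (Or.inl h))
    · intro h; exact hnt (touches_of_close hX hY hx hy (Or.inr h))
  -- choose a closest pair
  obtain ⟨⟨x, y⟩, hxy, hmin⟩ := Finset.exists_min_image (X ×ˢ Y)
    (fun p => G.dist p.1 p.2) (hXne.product hYne)
  rw [Finset.mem_product] at hxy
  obtain ⟨hx, hy⟩ := hxy
  set d := G.dist x y with hd
  have hd2 : 2 ≤ d := by
    have h1 : d ≠ 0 := by
      rw [hd, Ne, SimpleGraph.Connected.dist_eq_zero_iff hconn]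
      exact (hfar x hx y hy).1
    have h2 : d ≠ 1 := by
      rw [hd, Ne, SimpleGraph.dist_eq_one_iff_adj]
      exact (hfar x hx y hy).2
    omega
  obtain ⟨p, hp⟩ := hconn.exists_walk_length_eq_dist x y
  -- exact distances along the walk
  have hexact : ∀ i ≤ d, G.dist x (p.getVert i) = i ∧ G.dist (p.getVert i) y = d - i := by
    intro i hi
    have h1 := dist_getVert_le hconn p i
    have h2 := dist_getVert_le' hconn p (by omega : i ≤ p.length)
    rw [hp] at h2
    have h3 : d ≤ G.dist x (p.getVert i) + G.dist (p.getVert i) y := hconn.dist_triangle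
    omega
  set z := p.getVert 1 with hz
  have hadjxz : G.Adj x z := by
    have := p.adj_getVert_succ (i := 0) (by omega)
    rwa [p.getVert_zero] at this
  have hzX : z ∉ X := by
    intro hzX
    have hmin' := hmin (z, y) (Finset.mem_product.mpr ⟨hzX, hy⟩)
    have h1 := (hexact 1 (by omega)).2
    rw [← hz] at h1
    simp only at hmin'
    omega
  have hzY : z ∉ Y := by
    intro hzY
    have hmin' := hmin (x, z) (Finset.mem_product.mpr ⟨hx, hzY⟩)
    have h1 : G.dist x z = 1 := SimpleGraph.dist_eq_one_iff_adj.mpr hadjxz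
    simp only at hmin'
    omega
  -- d must equal 2, else an induced P4 appears
  have hd3 : d = 2 := by
    by_contra hne
    have hd3' : 3 ≤ d := by omega
    have hab : G.Adj x (p.getVert 1) := by rw [hz] at hadjxz; exact hadjxz
    have hbc : G.Adj (p.getVert 1) (p.getVert 2) := p.adj_getVert_succ (by omega)
    have hce : G.Adj (p.getVert 2) (p.getVert 3) := p.adj_getVert_succ (by omega)
    have hdb : G.dist x (p.getVert 1) = 1 := (hexact 1 (by omega)).1
    have hdc : G.dist x (p.getVert 2) = 2 := (hexact 2 (by omega)).1
    have hde : G.dist x (p.getVert 3) = 3 := (hexact 3 (by omega)).1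
    have hbe2 : 2 ≤ G.dist (p.getVert 1) (p.getVert 3) := by
      have := hconn.dist_triangle (u := x) (v := p.getVert 1) (w := p.getVert 3)
      omega
    have hnac : ¬ G.Adj x (p.getVert 2) := fun h => by
      rw [← SimpleGraph.dist_eq_one_iff_adj] at h; omega
    have hnae : ¬ G.Adj x (p.getVert 3) := fun h => by
      rw [← SimpleGraph.dist_eq_one_iff_adj] at h; omega
    have hnbe : ¬ G.Adj (p.getVert 1) (p.getVert 3) := fun h => by
      rw [← SimpleGraph.dist_eq_one_iff_adj] at h; omega
    refine hP4 ⟨x, p.getVert 1, p.getVert 2, p.getVert 3, hab.ne, ?_, ?_, hbc.ne, ?_,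
      hce.ne, hab, hbc, hce, hnac, hnae, hnbe⟩
    · intro h; rw [← h, SimpleGraph.dist_self] at hdc; omega
    · intro h; rw [← h, SimpleGraph.dist_self] at hde; omega
    · intro h; rw [← h, SimpleGraph.dist_self] at hbe2; omega
  have hgy : p.getVert 2 = y := by
    have : p.length ≤ 2 := by omega
    exact p.getVert_of_length_le this
  have hadjzy : G.Adj z y := by
    have := p.adj_getVert_succ (i := 1) (by omega)
    rwa [hgy] at this
  exact ⟨z, by simp [hzX, hzY], ⟨x, hx, hadjxz.symm⟩, ⟨y, hy, hadjzy⟩⟩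
end

section
/- Let G be a graph and let A, B ⊆ V(G) be vertex subsets all of whose connected components have the same size s (so m(A) = m(B) is a constant multiset with every element equal to s). If the CC-Piran graph Π^cc(A, B) contains no induced cycle of even length at least 4 (is even-hole-free), then A and B are reconfigurable under the component jumping rule CJ; moreover, there exists a reconfiguration sequence from A to B under CJ of length exactly |C(A) \ C(B)|, which is shortest possible. -/
open scoped Classical

/-- The vertex set of the CC-Piran graph: connected components of `A` that are not
components of `B`, together with components of `B` that are not components of `A`. -/
noncomputable def ccPiranVerts {V : Type*} [Fintype V] [DecidableEq V] (G : SimpleGraph V)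
    (A B : Finset V) : Finset (Finset V) :=
  (comps G A \ comps G B) ∪ (comps G B \ comps G A)

/-- The CC-Piran graph `Π^cc(A, B)`: vertices are the components in the symmetric
difference of `C(A)` and `C(B)`; a component of `C(A) \ C(B)` is joined to a component
of `C(B) \ C(A)` whenever the two touch. -/
noncomputable def ccPiran {V : Type*} [Fintype V] [DecidableEq V] (G : SimpleGraph V) (A B : Finset V) :
    SimpleGraph {C : Finset V // C ∈ ccPiranVerts G A B} where
  Adj C D :=
    ((C.1 ∈ comps G A \ comps G B ∧ D.1 ∈ comps G B \ comps G A) ∨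
     (D.1 ∈ comps G A \ comps G B ∧ C.1 ∈ comps G B \ comps G A)) ∧
    IsConnSub G (C.1 ∪ D.1)
  symm := by
    constructor
    rintro C D ⟨h1, h2⟩
    exact ⟨h1.symm, by rwa [Finset.union_comm]⟩
  loopless := by
    constructor
    rintro C ⟨h1 | h1, _⟩ <;>
      exact (Finset.mem_sdiff.mp h1.1).2 (Finset.mem_sdiff.mp h1.2).1


open scoped Classical

section Basic
variable {V : Type*} [Fintype V] [DecidableEq V] {G : SimpleGraph V}

lemma mem_comps_iff {C U : Finset V} : C ∈ comps G U ↔ C ⊆ U ∧ IsConnSub G C ∧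
    ∀ D : Finset V, C ⊆ D → D ⊆ U → IsConnSub G D → D = C := by
  simp [comps]

lemma isConnSub_nonempty {C : Finset V} (h : IsConnSub G C) : C.Nonempty := by
  obtain ⟨⟨v, hv⟩⟩ := SimpleGraph.Connected.nonempty h
  exact ⟨v, hv⟩

lemma isConnSub_singleton (G : SimpleGraph V) (v : V) : IsConnSub G {v} := by
  unfold IsConnSub
  rw [Finset.coe_singleton, SimpleGraph.connected_iff]
  refine ⟨fun x y => ?_, ⟨⟨v, rfl⟩⟩⟩
  have : x = y := Subsingleton.elim x y
  exact this ▸ SimpleGraph.Reachable.refl x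

lemma isConnSub_union_inter {C D : Finset V} (hC : IsConnSub G C) (hD : IsConnSub G D)
    (h : (C ∩ D).Nonempty) : IsConnSub G (C ∪ D) := by
  have : ((C : Set V) ∩ (D : Set V)).Nonempty := by
    obtain ⟨v, hv⟩ := h
    exact ⟨v, by simpa using Finset.mem_inter.mp hv⟩
  have := SimpleGraph.induce_union_connected hC.preconnected hD.preconnected this
  unfold IsConnSub
  rwa [Finset.coe_union]

lemma isConnSub_union_adj {C D : Finset V} (hC : IsConnSub G C) (hD : IsConnSub G D)
    {c d : V} (hc : c ∈ C) (hd : d ∈ D) (h : G.Adj c d) : IsConnSub G (C ∪ D) := by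
  have := SimpleGraph.connected_induce_union hC.preconnected hD.preconnected (by simpa using hc) (by simpa using hd) h
  unfold IsConnSub
  rwa [Finset.coe_union]

lemma exists_comp_mem {U : Finset V} {v : V} (hv : v ∈ U) : ∃ C ∈ comps G U, v ∈ C := by
  classical
  set F : Finset (Finset V) := Finset.univ.filter
    (fun D => v ∈ D ∧ D ⊆ U ∧ IsConnSub G D) with hF
  have hne : F.Nonempty := ⟨{v}, by simp [hF, hv, isConnSub_singleton G v]⟩
  obtain ⟨M, hM, hmax⟩ : ∃ M ∈ F, ∀ x ∈ F, ¬ M < x := by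
    obtain ⟨M, hM⟩ := Finset.exists_maximal hne
    exact ⟨M, hM.1, fun x hx hlt => hlt.not_ge (hM.2 hx hlt.le)⟩
  simp only [hF, Finset.mem_filter, Finset.mem_univ, true_and] at hM
  refine ⟨M, mem_comps_iff.mpr ⟨hM.2.1, hM.2.2, ?_⟩, hM.1⟩
  intro D hMD hDU hD
  by_contra hne'
  exact hmax D (by simp [hF, hMD hM.1, hDU, hD]) (lt_of_le_of_ne hMD (fun h => hne' h.symm) : M < D)

lemma exists_comp_subset {U D : Finset V} (hD : IsConnSub G D) (hDU : D ⊆ U) :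
    ∃ C ∈ comps G U, D ⊆ C := by
  obtain ⟨v, hv⟩ := isConnSub_nonempty hD
  obtain ⟨C, hC, hvC⟩ := exists_comp_mem (G := G) (hDU hv)
  obtain ⟨hCU, hCconn, hCmax⟩ := mem_comps_iff.mp hC
  have hconn : IsConnSub G (C ∪ D) := isConnSub_union_inter hCconn hD ⟨v, by simp [hv, hvC]⟩
  have := hCmax (C ∪ D) Finset.subset_union_left (Finset.union_subset hCU hDU) hconn
  exact ⟨C, hC, le_of_le_of_eq (Finset.subset_union_right : D ⊆ C ∪ D) this⟩

lemma comps_not_touch {U C D : Finset V} (hC : C ∈ comps G U) (hD : D ∈ comps G U)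
    (hne : C ≠ D) : ¬ IsConnSub G (C ∪ D) := by
  intro h
  obtain ⟨hCU, _, hCmax⟩ := mem_comps_iff.mp hC
  obtain ⟨hDU, _, hDmax⟩ := mem_comps_iff.mp hD
  have h1 := hCmax (C ∪ D) Finset.subset_union_left (Finset.union_subset hCU hDU) h
  have h2 := hDmax (C ∪ D) Finset.subset_union_right (Finset.union_subset hCU hDU) h
  exact hne (h1.symm.trans h2)

lemma comps_disjoint {U C D : Finset V} (hC : C ∈ comps G U) (hD : D ∈ comps G U)
    (hne : C ≠ D) : ∀ v ∈ C, v ∉ D := by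
  intro v hvC hvD
  exact comps_not_touch hC hD hne
    (isConnSub_union_inter (mem_comps_iff.mp hC).2.1 (mem_comps_iff.mp hD).2.1
      ⟨v, Finset.mem_inter.mpr ⟨hvC, hvD⟩⟩)

lemma sup_comps_eq (G : SimpleGraph V) (U : Finset V) : (comps G U).sup id = U := by
  apply Finset.Subset.antisymm
  · intro x hx
    obtain ⟨C, hC, hxC⟩ := Finset.mem_sup.mp hx
    exact (mem_comps_iff.mp hC).1 hxC
  · intro v hv
    obtain ⟨C, hC, hvC⟩ := exists_comp_mem (G := G) hv
    exact Finset.mem_sup.mpr ⟨C, hC, hvC⟩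

lemma eq_of_comps_eq {U U' : Finset V} (h : comps G U = comps G U') : U = U' := by
  rw [← sup_comps_eq G U, ← sup_comps_eq G U', h]

end Basic

section Step
variable {V : Type*} [Fintype V] [DecidableEq V] {G : SimpleGraph V}

lemma exists_crossing_edge {E T : Finset V} (hE : IsConnSub G E)
    {p q : V} (hp : p ∈ E) (hq : q ∈ E) (hpT : p ∈ T) (hqT : q ∉ T) :
    ∃ u ∈ E, ∃ w ∈ E, u ∈ T ∧ w ∉ T ∧ G.Adj u w := by
  have hreach := SimpleGraph.Connected.preconnected hE
    ⟨p, by simpa using hp⟩ ⟨q, by simpa using hq⟩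
  obtain ⟨wlk⟩ := hreach
  suffices h : ∀ (x y : ↥((E : Set V))) (_ : (G.induce (E : Set V)).Walk x y),
      x.1 ∈ T → y.1 ∉ T → ∃ u ∈ E, ∃ w ∈ E, u ∈ T ∧ w ∉ T ∧ G.Adj u w by
    exact h _ _ wlk hpT hqT
  intro x y wk
  induction wk with
  | nil => intro h1 h2; exact absurd h1 h2
  | @cons a b c hadj pp ih =>
    intro h1 h2
    by_cases hb : b.1 ∈ T
    · exact ih hb h2
    · exact ⟨a.1, by simpa using a.2, b.1, by simpa using b.2, h1, hb, hadj⟩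

variable {U a b : Finset V}

lemma step_disj (ha : a ∈ comps G U) (hb : IsConnSub G b)
    (hnt : ∀ C ∈ comps G U, C ≠ a → ¬ IsConnSub G (b ∪ C)) :
    ∀ v ∈ U \ a, v ∉ b := by
  intro v hv hvb
  rw [Finset.mem_sdiff] at hv
  obtain ⟨C, hC, hvC⟩ := exists_comp_mem (G := G) hv.1
  have hCa : C ≠ a := fun h => hv.2 (h ▸ hvC)
  exact hnt C hC hCa (isConnSub_union_inter hb (mem_comps_iff.mp hC).2.1
    ⟨v, Finset.mem_inter.mpr ⟨hvb, hvC⟩⟩)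

lemma no_cross (ha : a ∈ comps G U) (hb : IsConnSub G b)
    (hnt : ∀ C ∈ comps G U, C ≠ a → ¬ IsConnSub G (b ∪ C))
    {E : Finset V} (hEsub : E ⊆ (U \ a) ∪ b) (hE : IsConnSub G E) (hbE : b ⊆ E) : E = b := by
  refine Finset.Subset.antisymm ?_ hbE
  intro q hq
  by_contra hqb
  obtain ⟨p, hp⟩ := isConnSub_nonempty hb
  obtain ⟨u, _, w, hw, huT, hwT, hadj⟩ := exists_crossing_edge hE (hbE hp) hq hp hqb
  have hwUa : w ∈ U \ a := by
    have := hEsub hw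
    rw [Finset.mem_union] at this
    tauto
  rw [Finset.mem_sdiff] at hwUa
  obtain ⟨C, hC, hwC⟩ := exists_comp_mem (G := G) hwUa.1
  have hCa : C ≠ a := fun h => hwUa.2 (h ▸ hwC)
  exact hnt C hC hCa (isConnSub_union_adj hb (mem_comps_iff.mp hC).2.1 huT hwC hadj)

lemma b_not_comp (hab : a ≠ b)
    (hnt : ∀ C ∈ comps G U, C ≠ a → ¬ IsConnSub G (b ∪ C)) (hb : IsConnSub G b) :
    b ∉ comps G U := by
  intro hbU
  exact hnt b hbU (fun h => hab h.symm) (by rwa [Finset.union_self])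

lemma comps_step (ha : a ∈ comps G U) (hb : IsConnSub G b) (hab : a ≠ b)
    (hnt : ∀ C ∈ comps G U, C ≠ a → ¬ IsConnSub G (b ∪ C)) :
    comps G ((U \ a) ∪ b) = insert b ((comps G U).erase a) := by
  have hbU' : b ⊆ (U \ a) ∪ b := Finset.subset_union_right
  have hsub : U \ a ⊆ (U \ a) ∪ b := Finset.subset_union_left
  ext E
  constructor
  · intro hE
    obtain ⟨hEsub, hEconn, hEmax⟩ := mem_comps_iff.mp hE
    by_cases hEb : (E ∩ b).Nonempty
    · have h1 : IsConnSub G (b ∪ E) :=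
        isConnSub_union_inter hb hEconn (by rwa [Finset.inter_comm] at hEb)
      have h2 : b ∪ E = E := hEmax (b ∪ E) Finset.subset_union_right
        (Finset.union_subset hbU' hEsub) h1
      have hbE : b ⊆ E := le_of_le_of_eq (Finset.subset_union_left : b ⊆ b ∪ E) h2
      have hEeq : E = b := no_cross ha hb hnt hEsub hEconn hbE
      rw [hEeq]
      exact Finset.mem_insert_self b _
    · have hEUa : E ⊆ U \ a := by
        intro v hv
        have := hEsub hv
        rw [Finset.mem_union] at this
        rcases this with h | h
        · exact h
        · exact absurd ⟨v, Finset.mem_inter.mpr ⟨hv, h⟩⟩ hEb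
      obtain ⟨C, hC, hEC⟩ := exists_comp_subset hEconn (hEUa.trans Finset.sdiff_subset)
      obtain ⟨v, hv⟩ := isConnSub_nonempty hEconn
      have hCa : C ≠ a := by
        intro h
        exact (Finset.mem_sdiff.mp (hEUa hv)).2 (h ▸ hEC hv)
      have hCU' : C ⊆ (U \ a) ∪ b := by
        intro w hw
        exact hsub (Finset.mem_sdiff.mpr ⟨(mem_comps_iff.mp hC).1 hw,
          comps_disjoint hC ha hCa w hw⟩)
      have : C = E := hEmax C hEC hCU' (mem_comps_iff.mp hC).2.1
      exact Finset.mem_insert_of_mem (Finset.mem_erase.mpr ⟨this ▸ hCa, this ▸ hC⟩)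
  · intro hE
    rcases Finset.mem_insert.mp hE with rfl | hE
    · refine mem_comps_iff.mpr ⟨hbU', hb, ?_⟩
      intro D hbD hDU' hD
      exact no_cross ha hb hnt hDU' hD hbD
    · obtain ⟨hEa, hEU⟩ := Finset.mem_erase.mp hE
      obtain ⟨hEsub, hEconn, hEmax⟩ := mem_comps_iff.mp hEU
      have hEUa : E ⊆ U \ a := fun v hv =>
        Finset.mem_sdiff.mpr ⟨hEsub hv, comps_disjoint hEU ha hEa v hv⟩
      refine mem_comps_iff.mpr ⟨hEUa.trans hsub, hEconn, ?_⟩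
      intro D hED hDU' hD
      by_cases hDb : (D ∩ b).Nonempty
      · have h1 : IsConnSub G (b ∪ D) :=
          isConnSub_union_inter hb hD (by rwa [Finset.inter_comm] at hDb)
        have h2 : b ∪ D = b := no_cross ha hb hnt (Finset.union_subset hbU' hDU') h1
          Finset.subset_union_left
        obtain ⟨v, hv⟩ := isConnSub_nonempty hEconn
        have hvb : v ∈ b :=
          (le_of_le_of_eq (Finset.subset_union_right : D ⊆ b ∪ D) h2) (hED hv)
        exact absurd hvb (step_disj ha hb hnt v (hEUa hv))
      · have hDU : D ⊆ U := by
          intro w hw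
          have := hDU' hw
          rw [Finset.mem_union] at this
          rcases this with h | h
          · exact (Finset.mem_sdiff.mp h).1
          · exact absurd ⟨w, Finset.mem_inter.mpr ⟨hw, h⟩⟩ hDb
        exact hEmax D hED hDU hD

lemma adjCJ_step (ha : a ∈ comps G U) (hb : IsConnSub G b) (hab : a ≠ b)
    (hcard : a.card = b.card)
    (hnt : ∀ C ∈ comps G U, C ≠ a → ¬ IsConnSub G (b ∪ C)) :
    adjCJ G U ((U \ a) ∪ b) := by
  have hbU : b ∉ comps G U := b_not_comp hab hnt hb
  have hstep := comps_step ha hb hab hnt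
  have hberase : b ∉ (comps G U).erase a := fun h => hbU (Finset.mem_of_mem_erase h)
  have hval : (comps G U).val = a ::ₘ ((comps G U).erase a).val := by
    rw [Finset.erase_val]
    exact (Multiset.cons_erase (Finset.mem_def.mp ha)).symm
  refine ⟨?_, ?_, ?_⟩
  · unfold ccMultiset
    rw [hstep, Finset.insert_val_of_notMem hberase, hval]
    simp [hcard]
  · have hset : comps G U \ comps G ((U \ a) ∪ b) = {a} := by
      rw [hstep]
      ext C
      simp only [Finset.mem_sdiff, Finset.mem_insert, Finset.mem_erase, Finset.mem_singleton]
      constructor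
      · rintro ⟨hC, hC2⟩
        push_neg at hC2
        by_contra hCa
        exact (hC2.2 hCa) hC
      · rintro rfl
        exact ⟨ha, by push_neg; exact ⟨hab, fun h => absurd rfl h⟩⟩
    rw [hset, Finset.card_singleton]
  · have hset : comps G ((U \ a) ∪ b) \ comps G U = {b} := by
      rw [hstep]
      ext C
      simp only [Finset.mem_sdiff, Finset.mem_insert, Finset.mem_erase, Finset.mem_singleton]
      constructor
      · rintro ⟨hC1 | hC1, hC2⟩
        · exact hC1
        · exact absurd hC1.2 hC2
      · rintro rfl
        exact ⟨Or.inl rfl, hbU⟩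
    rw [hset, Finset.card_singleton]

end Step
section Cyc
variable {X : Type*} [Fintype X] {P : SimpleGraph X}

/-- A combinatorial cycle of length `n` in `P`: an `n`-periodic sequence of adjacent
vertices, injective on a period. -/
def IsCycSeq (P : SimpleGraph X) (n : ℕ) (c : ℕ → X) : Prop :=
  (∀ i, P.Adj (c i) (c (i + 1))) ∧ (∀ i, c (i + n) = c i) ∧
  (∀ i < n, ∀ j < n, c i = c j → i = j)

lemma exists_cycSeq {W : Finset X} (hW : W.Nonempty)
    (h2 : ∀ x ∈ W, ∃ y ∈ W, ∃ z ∈ W, y ≠ z ∧ P.Adj x y ∧ P.Adj x z) :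
    ∃ n, 3 ≤ n ∧ ∃ c, IsCycSeq P n c := by
  classical
  obtain ⟨x0, hx0⟩ := hW
  have hnb : ∀ (p x : X), ∃ y, x ∈ W → (y ∈ W ∧ y ≠ p ∧ P.Adj x y) := by
    intro p x
    by_cases hx : x ∈ W
    · obtain ⟨y, hy, z, hz, hyz, hxy, hxz⟩ := h2 x hx
      by_cases h : y = p
      · exact ⟨z, fun _ => ⟨hz, by rw [← h]; exact hyz.symm, hxz⟩⟩
      · exact ⟨y, fun _ => ⟨hy, h, hxy⟩⟩
    · exact ⟨x0, fun h => absurd h hx⟩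
  choose nb hnb using hnb
  let f : ℕ → X × X := fun k => Nat.rec (x0, nb x0 x0) (fun _ q => (q.2, nb q.1 q.2)) k
  have hfs : ∀ k, f (k + 1) = ((f k).2, nb (f k).1 (f k).2) := fun k => rfl
  have hinv : ∀ k, (f k).1 ∈ W ∧ (f k).2 ∈ W ∧ P.Adj (f k).1 (f k).2 ∧
      (f (k + 1)).2 ≠ (f k).1 := by
    intro k
    induction k with
    | zero =>
      obtain ⟨h1, h2', h3⟩ := hnb x0 x0 hx0
      obtain ⟨g1, g2, g3⟩ := hnb x0 (nb x0 x0) h1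
      exact ⟨hx0, h1, h3, g2⟩
    | succ k ih =>
      obtain ⟨h1, h2', h3, h4⟩ := ih
      obtain ⟨g1, g2, g3⟩ := hnb (f k).1 (f k).2 h2'
      obtain ⟨e1, e2, e3⟩ := hnb (f (k+1)).1 (f (k+1)).2 (by rw [hfs k]; exact g1)
      refine ⟨by rw [hfs k]; exact h2', by rw [hfs k]; exact g1, by rw [hfs k]; exact g3, ?_⟩
      rw [hfs (k+1)]
      exact e2
  set x : ℕ → X := fun k => (f k).1 with hx
  have hxadj : ∀ k, P.Adj (x k) (x (k + 1)) := by
    intro k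
    have := (hinv k).2.2.1
    rw [hx]
    simpa [hfs k] using this
  have hxnb : ∀ k, x (k + 2) ≠ x k := by
    intro k
    have := (hinv k).2.2.2
    rw [hx]
    simpa [hfs (k+1)] using this
  -- pigeonhole
  have hrep : ∃ i j, i < j ∧ x i = x j := by
    obtain ⟨i, j, hij, heq⟩ := Finite.exists_ne_map_eq_of_infinite x
    rcases lt_or_gt_of_ne hij with h | h
    · exact ⟨i, j, h, heq⟩
    · exact ⟨j, i, h, heq.symm⟩
  let Q : ℕ → Prop := fun j => ∃ i, i < j ∧ x i = x j
  have hQ : ∃ j, Q j := by obtain ⟨i, j, h1, h2⟩ := hrep; exact ⟨j, i, h1, h2⟩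
  set j0 := Nat.find hQ with hj0
  obtain ⟨i0, hi0, heq0⟩ := Nat.find_spec hQ
  set m := j0 - i0 with hm
  have hmpos : 0 < m := by omega
  have hinj : ∀ i < m, ∀ j < m, x (i0 + i) = x (i0 + j) → i = j := by
    intro i hi j hj he
    by_contra hne
    rcases Nat.lt_or_ge i j with h | h
    · exact Nat.find_min hQ (show i0 + j < j0 by omega) ⟨i0 + i, by omega, he⟩
    · have h' : j < i := by omega
      exact Nat.find_min hQ (show i0 + i < j0 by omega) ⟨i0 + j, by omega, he.symm⟩
  have hm3 : 3 ≤ m := by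
    rcases Nat.lt_or_ge m 3 with h | h
    · interval_cases m
      · have : x (i0 + 1) = x i0 := by
          rw [show i0 + 1 = j0 by omega] at *
          exact heq0.symm
        exact absurd this (hxadj i0).ne'
      · have : x (i0 + 2) = x i0 := by
          rw [show i0 + 2 = j0 by omega] at *
          exact heq0.symm
        exact absurd this (hxnb i0)
    · exact h
  refine ⟨m, hm3, fun k => x (i0 + k % m), ?_, ?_, ?_⟩
  · intro i
    show P.Adj (x (i0 + i % m)) (x (i0 + (i + 1) % m))
    have hr : i % m < m := Nat.mod_lt _ (by omega)
    have hmod : (i + 1) % m = (i % m + 1) % m := by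
      conv_lhs => rw [Nat.add_mod, Nat.mod_eq_of_lt (show 1 < m by omega)]
    rcases Nat.lt_or_ge (i % m + 1) m with h | h
    · rw [hmod, Nat.mod_eq_of_lt h, ← Nat.add_assoc]
      exact hxadj (i0 + i % m)
    · have hr1 : i % m + 1 = m := by omega
      rw [hmod, hr1, Nat.mod_self, Nat.add_zero]
      have hx0m : x (i0 + 0) = x (i0 + m) := by
        rw [Nat.add_zero, show i0 + m = j0 by omega]
        exact heq0
      rw [Nat.add_zero] at hx0m
      rw [hx0m, show i0 + m = i0 + (i % m) + 1 by omega]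
      exact hxadj (i0 + i % m)
  · intro i
    show x (i0 + (i + m) % m) = x (i0 + i % m)
    rw [Nat.add_mod_right]
  · intro i hi j hj he
    have he' : x (i0 + i % m) = x (i0 + j % m) := he
    rw [Nat.mod_eq_of_lt hi, Nat.mod_eq_of_lt hj] at he'
    exact hinj i hi j hj he'


end Cyc
section Cyc2
variable {X : Type*} [Fintype X] {P : SimpleGraph X}

lemma cycSeq_even {n : ℕ} {c : ℕ → X} (hc : IsCycSeq P n c) (hn : n ≠ 0)
    (side : X → Prop) (hside : ∀ x y, P.Adj x y → (side x ↔ ¬ side y)) : Even n := by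
  classical
  have key : ∀ k, side (c k) ↔ (Even k ↔ side (c 0)) := by
    intro k
    induction k with
    | zero => simp
    | succ k ih =>
      have h1 : side (c k) ↔ ¬ side (c (k + 1)) := hside _ _ (hc.1 k)
      rw [Nat.even_add_one]
      tauto
  have hcn : c n = c 0 := by
    have := hc.2.1 0
    simpa using this
  have := key n
  rw [hcn] at this
  tauto

lemma nat_mod_eq_one_iff {n d : ℕ} (hn : 2 ≤ n) (hd : d < 2 * n) :
    d % n = 1 ↔ (d = 1 ∨ d = n + 1) := by
  constructor
  · intro h
    rcases Nat.lt_or_ge d n with h1 | h1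
    · rw [Nat.mod_eq_of_lt h1] at h
      omega
    · rw [Nat.mod_eq_sub_mod h1, Nat.mod_eq_of_lt (by omega)] at h
      omega
  · rintro (rfl | rfl)
    · exact Nat.mod_eq_of_lt (by omega)
    · rw [Nat.add_mod_left]
      exact Nat.mod_eq_of_lt (by omega)

lemma cycleGraph_adj_iff {n : ℕ} (hn : 2 ≤ n) {u v : Fin n} :
    (SimpleGraph.cycleGraph n).Adj u v ↔
      (v.val = u.val + 1 ∨ u.val = v.val + 1 ∨ (u.val = 0 ∧ v.val = n - 1) ∨
        (v.val = 0 ∧ u.val = n - 1)) := by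
  rw [SimpleGraph.cycleGraph_adj']
  have hu := u.isLt
  have hv := v.isLt
  have hsub : ∀ (a b : Fin n), (a - b).val = (n - b.val + a.val) % n := by
    intro a b
    rw [Fin.sub_def]
  rw [hsub, hsub]
  rw [nat_mod_eq_one_iff hn (by omega), nat_mod_eq_one_iff hn (by omega)]
  omega

lemma exists_cycle_embedding (hex : ∃ n, 3 ≤ n ∧ ∃ c, IsCycSeq P n c)
    (side : X → Prop) (hside : ∀ x y, P.Adj x y → (side x ↔ ¬ side y)) :
    ∃ n, 4 ≤ n ∧ Even n ∧ Nonempty (SimpleGraph.cycleGraph n ↪g P) := by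
  classical
  have hQ : ∃ n, 3 ≤ n ∧ ∃ c, IsCycSeq P n c := hex
  obtain ⟨hn3, c, hc⟩ := Nat.find_spec hQ
  set n := Nat.find hQ with hn
  have hmin : ∀ m, 3 ≤ m → m < n → ¬ ∃ c', IsCycSeq P m c' := by
    intro m h3 hm hc'
    exact Nat.find_min hQ hm ⟨h3, hc'⟩
  obtain ⟨hadj, hper, hinj⟩ := hc
  have heven : Even n := cycSeq_even ⟨hadj, hper, hinj⟩ (by omega) side hside
  have hn4 : 4 ≤ n := by
    obtain ⟨t, ht⟩ := heven
    omega
  -- chords give shorter cycles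
  have hchord : ∀ i j, i < n → j < n → i < j → P.Adj (c i) (c j) →
      j = i + 1 ∨ (i = 0 ∧ j = n - 1) := by
    intro i j hi hj hij hadj'
    by_contra hcon
    push_neg at hcon
    obtain ⟨h1, h2⟩ := hcon
    have hji2 : 2 ≤ j - i := by omega
    have hjin : j - i ≤ n - 2 := by
      rcases Nat.lt_or_ge (j - i) (n - 1) with h | h
      · omega
      · have : j - i = n - 1 := by omega
        have : i = 0 ∧ j = n - 1 := by omega
        exact absurd this (by tauto)
    set m' := j - i + 1 with hm'
    refine hmin m' (by omega) (by omega) ⟨fun k => c (i + k % m'), ?_, ?_, ?_⟩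
    · intro k
      show P.Adj (c (i + k % m')) (c (i + (k + 1) % m'))
      have hr : k % m' < m' := Nat.mod_lt _ (by omega)
      have hmod : (k + 1) % m' = (k % m' + 1) % m' := by
        conv_lhs => rw [Nat.add_mod, Nat.mod_eq_of_lt (show 1 < m' by omega)]
      rcases Nat.lt_or_ge (k % m' + 1) m' with h | h
      · rw [hmod, Nat.mod_eq_of_lt h, ← Nat.add_assoc]
        exact hadj (i + k % m')
      · have hr1 : k % m' = m' - 1 := by omega
        rw [hmod, show k % m' + 1 = m' by omega, Nat.mod_self, Nat.add_zero, hr1,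
          show i + (m' - 1) = j by omega]
        exact hadj'.symm
    · intro k
      show c (i + (k + m') % m') = c (i + k % m')
      rw [Nat.add_mod_right]
    · intro a ha b hb he
      have he' : c (i + a % m') = c (i + b % m') := he
      rw [Nat.mod_eq_of_lt ha, Nat.mod_eq_of_lt hb] at he'
      have := hinj (i + a) (by omega) (i + b) (by omega) he'
      omega
  -- build the embedding
  have hcinj : ∀ u v : Fin n, c u.val = c v.val → u = v := by
    intro u v h
    exact Fin.ext (hinj u.val u.isLt v.val v.isLt h)
  refine ⟨n, hn4, heven, ⟨⟨⟨fun v => c v.val, fun u v h => hcinj u v h⟩, ?_⟩⟩⟩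
  intro u v
  show P.Adj (c u.val) (c v.val) ↔ _
  rw [cycleGraph_adj_iff (by omega)]
  have hu := u.isLt
  have hv := v.isLt
  constructor
  · intro h
    rcases Nat.lt_trichotomy u.val v.val with hlt | heq | hlt
    · rcases hchord u.val v.val hu hv hlt h with h' | h'
      · omega
      · omega
    · exfalso
      exact h.ne (by rw [heq])
    · rcases hchord v.val u.val hv hu hlt h.symm with h' | h'
      · omega
      · omega
  · intro h
    have hstep : ∀ a : ℕ, a + 1 < n → P.Adj (c a) (c (a + 1)) := fun a _ => hadj a
    have hwrap : P.Adj (c (n - 1)) (c 0) := by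
      have h0 : c n = c 0 := by simpa using hper 0
      have := hadj (n - 1)
      rw [show n - 1 + 1 = n by omega, h0] at this
      exact this
    rcases h with h | h | h | h
    · rw [show v.val = u.val + 1 by omega]
      exact hadj u.val
    · rw [show u.val = v.val + 1 by omega]
      exact (hadj v.val).symm
    · rw [h.1, h.2]
      exact hwrap.symm
    · rw [h.1, h.2]
      exact hwrap
end Cyc2
section Greedy
variable {V : Type*} [Fintype V] [DecidableEq V] {G : SimpleGraph V} {A B : Finset V}

/-- If every vertex on the `B` side of a sub-configuration touches at least two
`A`-side components and the sides are balanced, the Piran graph has an even hole. -/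
lemma greedy_lemma
    (hehf : ∀ ℓ : ℕ, 4 ≤ ℓ → Even ℓ →
      IsEmpty (SimpleGraph.cycleGraph ℓ ↪g ccPiran G A B)) :
    ∀ (N : ℕ) (SA SB : Finset (Finset V)), SA ⊆ comps G A \ comps G B →
      SB ⊆ comps G B \ comps G A → SA.card ≤ N → SA.card ≤ SB.card → SB.Nonempty →
      ∃ b ∈ SB, (SA.filter (fun a => IsConnSub G (b ∪ a))).card ≤ 1 := by
  classical
  intro N
  induction N with
  | zero =>
    intro SA SB hSA hSB hN _ hne
    obtain ⟨b, hb⟩ := hne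
    refine ⟨b, hb, ?_⟩
    have : SA = ∅ := Finset.card_eq_zero.mp (by omega)
    rw [this]
    simp
  | succ N ih =>
    intro SA SB hSA hSB hN hcard hne
    by_cases hdone : ∃ b ∈ SB, (SA.filter (fun a => IsConnSub G (b ∪ a))).card ≤ 1
    · exact hdone
    push_neg at hdone
    have hbig : ∀ b ∈ SB, 2 ≤ (SA.filter (fun a => IsConnSub G (b ∪ a))).card :=
      fun b hb => hdone b hb
    by_cases hA0 : ∃ a ∈ SA, (SB.filter (fun b => IsConnSub G (b ∪ a))).card = 0
    · obtain ⟨a, ha, ha0⟩ := hA0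
      have hnt : ∀ b ∈ SB, ¬ IsConnSub G (b ∪ a) := by
        intro b hb hconn
        have : b ∈ SB.filter (fun b => IsConnSub G (b ∪ a)) := Finset.mem_filter.mpr ⟨hb, hconn⟩
        rw [Finset.card_eq_zero.mp ha0] at this
        exact absurd this (Finset.notMem_empty b)
      obtain ⟨b, hb, hbc⟩ := ih (SA.erase a) SB ((Finset.erase_subset a SA).trans hSA) hSB
        (by have := Finset.card_erase_of_mem ha; omega)
        (by have := Finset.card_erase_of_mem ha; omega) hne
      refine ⟨b, hb, ?_⟩
      have heq : SA.filter (fun a' => IsConnSub G (b ∪ a')) =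
          (SA.erase a).filter (fun a' => IsConnSub G (b ∪ a')) := by
        ext c
        simp only [Finset.mem_filter, Finset.mem_erase]
        constructor
        · rintro ⟨hc1, hc2⟩
          refine ⟨⟨?_, hc1⟩, hc2⟩
          rintro rfl
          exact hnt b hb hc2
        · rintro ⟨⟨_, hc1⟩, hc2⟩
          exact ⟨hc1, hc2⟩
      rw [heq]
      exact hbc
    by_cases hA1 : ∃ a ∈ SA, (SB.filter (fun b => IsConnSub G (b ∪ a))).card = 1
    · obtain ⟨a, ha, ha1⟩ := hA1
      obtain ⟨b0, hb0⟩ := Finset.card_eq_one.mp ha1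
      have hb0SB : b0 ∈ SB := by
        have : b0 ∈ SB.filter (fun b => IsConnSub G (b ∪ a)) := by rw [hb0]; simp
        exact (Finset.mem_filter.mp this).1
      have hnt : ∀ b ∈ SB, b ≠ b0 → ¬ IsConnSub G (b ∪ a) := by
        intro b hb hbne hconn
        have : b ∈ SB.filter (fun b => IsConnSub G (b ∪ a)) := Finset.mem_filter.mpr ⟨hb, hconn⟩
        rw [hb0] at this
        exact hbne (Finset.mem_singleton.mp this)
      have hSA2 : 2 ≤ SA.card := by
        obtain ⟨b, hb⟩ := hne
        calc 2 ≤ (SA.filter (fun a => IsConnSub G (b ∪ a))).card := hbig b hb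
          _ ≤ SA.card := Finset.card_filter_le _ _
      obtain ⟨b, hb, hbc⟩ := ih (SA.erase a) (SB.erase b0)
        ((Finset.erase_subset a SA).trans hSA) ((Finset.erase_subset b0 SB).trans hSB)
        (by have := Finset.card_erase_of_mem ha; omega)
        (by have h1 := Finset.card_erase_of_mem ha
            have h2 := Finset.card_erase_of_mem hb0SB
            omega)
        (Finset.card_pos.mp (by
          have h2 := Finset.card_erase_of_mem hb0SB
          have h1 := Finset.card_erase_of_mem ha
          omega))
      have hbSB : b ∈ SB := Finset.mem_of_mem_erase hb
      have hbne : b ≠ b0 := (Finset.mem_erase.mp hb).1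
      refine ⟨b, hbSB, ?_⟩
      have heq : SA.filter (fun a' => IsConnSub G (b ∪ a')) =
          (SA.erase a).filter (fun a' => IsConnSub G (b ∪ a')) := by
        ext c
        simp only [Finset.mem_filter, Finset.mem_erase]
        constructor
        · rintro ⟨hc1, hc2⟩
          refine ⟨⟨?_, hc1⟩, hc2⟩
          rintro rfl
          exact hnt b hbSB hbne hc2
        · rintro ⟨⟨_, hc1⟩, hc2⟩
          exact ⟨hc1, hc2⟩
      rw [heq]
      exact hbc
    -- min degree 2 on both sides: build an even hole, contradiction
    exfalso
    push_neg at hA0 hA1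
    have hAbig : ∀ a ∈ SA, 2 ≤ (SB.filter (fun b => IsConnSub G (b ∪ a))).card := by
      intro a ha
      have h0 := hA0 a ha
      have h1 := hA1 a ha
      omega
    set X := {C : Finset V // C ∈ ccPiranVerts G A B}
    set P := ccPiran G A B
    have hmemA : ∀ a ∈ SA, a ∈ ccPiranVerts G A B := by
      intro a ha
      exact Finset.mem_union_left _ (hSA ha)
    have hmemB : ∀ b ∈ SB, b ∈ ccPiranVerts G A B := by
      intro b hb
      exact Finset.mem_union_right _ (hSB hb)
    set W : Finset X := Finset.univ.filter (fun x : X => x.1 ∈ SA ∨ x.1 ∈ SB) with hW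
    have hWne : W.Nonempty := by
      obtain ⟨b, hb⟩ := hne
      exact ⟨⟨b, hmemB b hb⟩, by simp [hW, hb]⟩
    have hadjAB : ∀ (a b : Finset V) (hav : a ∈ ccPiranVerts G A B)
        (hbv : b ∈ ccPiranVerts G A B), a ∈ SA → b ∈ SB → IsConnSub G (b ∪ a) →
        P.Adj ⟨a, hav⟩ ⟨b, hbv⟩ := by
      intro a b hav hbv haS hbS hconn
      refine ⟨Or.inl ⟨hSA haS, hSB hbS⟩, by rwa [Finset.union_comm] at hconn⟩
    have hdeg2 : ∀ x ∈ W, ∃ y ∈ W, ∃ z ∈ W, y ≠ z ∧ P.Adj x y ∧ P.Adj x z := by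
      intro x hx
      rw [hW, Finset.mem_filter] at hx
      rcases hx.2 with hxa | hxb
      · obtain ⟨b1, hb1, b2, hb2, hb12⟩ := Finset.one_lt_card.mp (hAbig x.1 hxa)
        rw [Finset.mem_filter] at hb1 hb2
        refine ⟨⟨b1, hmemB b1 hb1.1⟩, by simp [hW, hb1.1], ⟨b2, hmemB b2 hb2.1⟩,
          by simp [hW, hb2.1], fun h => hb12 (congrArg Subtype.val h), ?_, ?_⟩
        · exact hadjAB x.1 b1 x.2 _ hxa hb1.1 hb1.2
        · exact hadjAB x.1 b2 x.2 _ hxa hb2.1 hb2.2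
      · obtain ⟨a1, ha1, a2, ha2, ha12⟩ := Finset.one_lt_card.mp (hbig x.1 hxb)
        rw [Finset.mem_filter] at ha1 ha2
        refine ⟨⟨a1, hmemA a1 ha1.1⟩, by simp [hW, ha1.1], ⟨a2, hmemA a2 ha2.1⟩,
          by simp [hW, ha2.1], fun h => ha12 (congrArg Subtype.val h), ?_, ?_⟩
        · exact (hadjAB a1 x.1 _ x.2 ha1.1 hxb ha1.2).symm
        · exact (hadjAB a2 x.1 _ x.2 ha2.1 hxb ha2.2).symm
    have hcyc := exists_cycSeq hWne hdeg2
    have hside : ∀ x y : X, P.Adj x y →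
        ((x.1 ∈ comps G A \ comps G B) ↔ ¬ (y.1 ∈ comps G A \ comps G B)) := by
      intro x y hxy
      obtain ⟨hor, _⟩ := hxy
      have hKdisj : ∀ z : Finset V, z ∈ comps G A \ comps G B →
          z ∈ comps G B \ comps G A → False := by
        intro z h1 h2
        exact (Finset.mem_sdiff.mp h2).2 (Finset.mem_sdiff.mp h1).1
      rcases hor with ⟨h1, h2⟩ | ⟨h1, h2⟩
      · exact ⟨fun _ hy => hKdisj y.1 hy h2, fun _ => h1⟩
      · exact ⟨fun hx => (hKdisj x.1 hx h2).elim, fun hny => (hny h1).elim⟩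
    obtain ⟨n, hn4, hneven, ⟨emb⟩⟩ := exists_cycle_embedding hcyc _ hside
    exact (hehf n hn4 hneven).false emb

end Greedy
section Main
variable {V : Type*} [Fintype V] [DecidableEq V] {G : SimpleGraph V} {A B : Finset V}

lemma sdiff_card_triangle (X Y Z : Finset (Finset V)) :
    (X \ Z).card ≤ (X \ Y).card + (Y \ Z).card := by
  have hsub : X \ Z ⊆ (X \ Y) ∪ (Y \ Z) := by
    intro c hc
    rw [Finset.mem_sdiff] at hc
    rw [Finset.mem_union, Finset.mem_sdiff, Finset.mem_sdiff]
    by_cases h : c ∈ Y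
    · exact Or.inr ⟨h, hc.2⟩
    · exact Or.inl ⟨hc.1, h⟩
  calc (X \ Z).card ≤ ((X \ Y) ∪ (Y \ Z)).card := Finset.card_le_card hsub
    _ ≤ (X \ Y).card + (Y \ Z).card := Finset.card_union_le _ _

lemma chain_bound : ∀ (ℓ : ℕ) (W : ℕ → Finset V),
    (∀ i < ℓ, adjCJ G (W i) (W (i + 1))) →
    (comps G (W 0) \ comps G (W ℓ)).card ≤ ℓ := by
  intro ℓ
  induction ℓ with
  | zero =>
    intro W _
    simp
  | succ ℓ ih =>
    intro W hW
    calc (comps G (W 0) \ comps G (W (ℓ + 1))).card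
        ≤ (comps G (W 0) \ comps G (W ℓ)).card +
          (comps G (W ℓ) \ comps G (W (ℓ + 1))).card := sdiff_card_triangle _ _ _
      _ ≤ ℓ + 1 := by
          have h1 := ih W (fun i hi => hW i (by omega))
          have h2 := (hW ℓ (by omega)).2.1
          omega

lemma chain_cc {ℓ : ℕ} {W : ℕ → Finset V} (h : ∀ i < ℓ, adjCJ G (W i) (W (i + 1))) :
    ∀ i ≤ ℓ, ccMultiset G (W i) = ccMultiset G (W 0) := by
  intro i
  induction i with
  | zero => intro _; rfl
  | succ i ih =>
    intro hi
    rw [← (h i (by omega)).1]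
    exact ih (by omega)

lemma build_lemma (s : ℕ)
    (hsA : ∀ C ∈ comps G A, C.card = s) (hsB : ∀ C ∈ comps G B, C.card = s)
    (hehf : ∀ ℓ : ℕ, 4 ≤ ℓ → Even ℓ →
      IsEmpty (SimpleGraph.cycleGraph ℓ ↪g ccPiran G A B)) :
    ∀ (n : ℕ) (SA SB : Finset (Finset V)), SA ⊆ comps G A \ comps G B →
      SB ⊆ comps G B \ comps G A → SA.card = n → SB.card = n →
      ∀ U : Finset V,
        comps G U = ((comps G A ∩ comps G B) ∪ SA) ∪ ((comps G B \ comps G A) \ SB) →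
        ∃ W : ℕ → Finset V, W 0 = U ∧ W n = B ∧ ∀ i < n, adjCJ G (W i) (W (i + 1)) := by
  classical
  intro n
  induction n with
  | zero =>
    intro SA SB hSA hSB hcA hcB U hU
    have hSAe : SA = ∅ := Finset.card_eq_zero.mp hcA
    have hSBe : SB = ∅ := Finset.card_eq_zero.mp hcB
    have hUB : comps G U = comps G B := by
      rw [hU, hSAe, hSBe]
      ext C
      simp only [Finset.union_empty, Finset.sdiff_empty, Finset.mem_union, Finset.mem_inter,
        Finset.mem_sdiff]
      tauto
    exact ⟨fun _ => B, (eq_of_comps_eq hUB).symm, rfl, fun i hi => absurd hi (by omega)⟩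
  | succ n ih =>
    intro SA SB hSA hSB hcA hcB U hU
    have hSBne : SB.Nonempty := Finset.card_pos.mp (by omega)
    have hSAne : SA.Nonempty := Finset.card_pos.mp (by omega)
    obtain ⟨b, hbSB, hb1⟩ := greedy_lemma hehf SA.card SA SB hSA hSB le_rfl (by omega) hSBne
    -- choose a
    have hchoice : ∃ a ∈ SA, ∀ a' ∈ SA, a' ≠ a → ¬ IsConnSub G (b ∪ a') := by
      rcases Nat.eq_zero_or_pos (SA.filter (fun a => IsConnSub G (b ∪ a))).card with h0 | hpos
      · obtain ⟨a, ha⟩ := hSAne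
        refine ⟨a, ha, ?_⟩
        intro a' ha' _ hconn
        have : a' ∈ SA.filter (fun a => IsConnSub G (b ∪ a)) := Finset.mem_filter.mpr ⟨ha', hconn⟩
        rw [Finset.card_eq_zero.mp h0] at this
        exact absurd this (Finset.notMem_empty a')
      · have h1 : (SA.filter (fun a => IsConnSub G (b ∪ a))).card = 1 := by omega
        obtain ⟨a, ha⟩ := Finset.card_eq_one.mp h1
        have haSA : a ∈ SA := by
          have : a ∈ SA.filter (fun a => IsConnSub G (b ∪ a)) := by rw [ha]; simp
          exact (Finset.mem_filter.mp this).1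
        refine ⟨a, haSA, ?_⟩
        intro a' ha' hne hconn
        have : a' ∈ SA.filter (fun a => IsConnSub G (b ∪ a)) := Finset.mem_filter.mpr ⟨ha', hconn⟩
        rw [ha] at this
        exact hne (Finset.mem_singleton.mp this)
    obtain ⟨a, haSA, hanott⟩ := hchoice
    -- basic membership facts
    have haKA : a ∈ comps G A \ comps G B := hSA haSA
    have hbKB : b ∈ comps G B \ comps G A := hSB hbSB
    have haA : a ∈ comps G A := (Finset.mem_sdiff.mp haKA).1
    have hbB : b ∈ comps G B := (Finset.mem_sdiff.mp hbKB).1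
    have hbnA : b ∉ comps G A := (Finset.mem_sdiff.mp hbKB).2
    have hanB : a ∉ comps G B := (Finset.mem_sdiff.mp haKA).2
    have hab : a ≠ b := fun h => hbnA (h ▸ haA)
    have hbconn : IsConnSub G b := (mem_comps_iff.mp hbB).2.1
    have haU : a ∈ comps G U := by
      rw [hU]
      exact Finset.mem_union_left _ (Finset.mem_union_right _ haSA)
    have hcard : a.card = b.card := by rw [hsA a haA, hsB b hbB]
    -- the no-touching condition
    have hnt : ∀ C ∈ comps G U, C ≠ a → ¬ IsConnSub G (b ∪ C) := by
      intro C hC hCa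
      rw [hU] at hC
      rcases Finset.mem_union.mp hC with hC' | hC'
      · rcases Finset.mem_union.mp hC' with hC'' | hC''
        · -- shared component
          have hCB : C ∈ comps G B := (Finset.mem_inter.mp hC'').2
          have hCA : C ∈ comps G A := (Finset.mem_inter.mp hC'').1
          have hbC : b ≠ C := fun h => hbnA (h ▸ hCA)
          exact comps_not_touch hbB hCB hbC
        · -- C ∈ SA
          exact hanott C hC'' hCa
      · -- C ∈ KB \ SB
        have hCB : C ∈ comps G B := (Finset.mem_sdiff.mp (Finset.mem_sdiff.mp hC').1).1
        have hCnSB : C ∉ SB := (Finset.mem_sdiff.mp hC').2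
        have hbC : b ≠ C := fun h => hCnSB (h ▸ hbSB)
        exact comps_not_touch hbB hCB hbC
    -- perform the jump
    set U' := (U \ a) ∪ b with hU'def
    have hstepCJ : adjCJ G U U' := adjCJ_step haU hbconn hab hcard hnt
    have hstep := comps_step haU hbconn hab hnt
    -- new invariant
    have hbKBmem : b ∈ comps G B \ comps G A := hbKB
    have hinv' : comps G U' = ((comps G A ∩ comps G B) ∪ SA.erase a) ∪
        ((comps G B \ comps G A) \ SB.erase b) := by
      rw [hstep, hU]
      ext C
      simp only [Finset.mem_insert, Finset.mem_erase, Finset.mem_union, Finset.mem_inter,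
        Finset.mem_sdiff]
      constructor
      · rintro (rfl | ⟨hCa, hC⟩)
        · exact Or.inr ⟨⟨hbB, hbnA⟩, fun h => h.1 rfl⟩
        · rcases hC with (h | h) | h
          · exact Or.inl (Or.inl h)
          · exact Or.inl (Or.inr ⟨hCa, h⟩)
          · refine Or.inr ⟨h.1, fun h' => h.2 h'.2⟩
      · rintro (((h1 | h1) | h1))
        · refine Or.inr ⟨?_, Or.inl (Or.inl h1)⟩
          rintro rfl
          exact hanB h1.2
        · exact Or.inr ⟨h1.1, Or.inl (Or.inr h1.2)⟩
        · by_cases hCb : C = b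
          · exact Or.inl hCb
          · refine Or.inr ⟨?_, Or.inr ⟨h1.1, fun hs => h1.2 ⟨hCb, hs⟩⟩⟩
            rintro rfl
            exact h1.1.2 haA
    obtain ⟨W', hW'0, hW'n, hW'adj⟩ := ih (SA.erase a) (SB.erase b)
      ((Finset.erase_subset a SA).trans hSA) ((Finset.erase_subset b SB).trans hSB)
      (by rw [Finset.card_erase_of_mem haSA]; omega)
      (by rw [Finset.card_erase_of_mem hbSB]; omega)
      U' hinv'
    refine ⟨fun i => if i = 0 then U else W' (i - 1), by simp, by simp [hW'n], ?_⟩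
    intro i hi
    rcases Nat.eq_zero_or_pos i with rfl | hipos
    · simpa [hW'0] using hstepCJ
    · have h1 : i ≠ 0 := by omega
      have h2 : i + 1 ≠ 0 := by omega
      simp only [h1, h2, if_false]
      have heq : i + 1 - 1 = i - 1 + 1 := by omega
      rw [heq]
      exact hW'adj (i - 1) (by omega)

end Main
/-- If all connected components of `A` and `B` have the same size `s`
and the CC-Piran graph `Π^cc(A, B)` is even-hole-free, then `A` and `B` are
reconfigurable under CJ, with a shortest reconfiguration sequence of length exactly
`|C(A) \ C(B)|`. -/
theorem stmt13 {V : Type*} [Fintype V] [DecidableEq V] (G : SimpleGraph V)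
    (A B : Finset V) (s : ℕ)
    (hm : ccMultiset G A = ccMultiset G B)
    (hsA : ∀ C ∈ comps G A, C.card = s) (hsB : ∀ C ∈ comps G B, C.card = s)
    (hehf : ∀ ℓ : ℕ, 4 ≤ ℓ → Even ℓ →
      IsEmpty (SimpleGraph.cycleGraph ℓ ↪g ccPiran G A B)) :
    (∃ W : ℕ → Finset V, W 0 = A ∧ W ((comps G A \ comps G B).card) = B ∧
      (∀ i ≤ (comps G A \ comps G B).card, ccMultiset G (W i) = ccMultiset G A) ∧
      ∀ i < (comps G A \ comps G B).card, adjCJ G (W i) (W (i + 1))) ∧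
    (∀ (ℓ : ℕ) (W : ℕ → Finset V), W 0 = A → W ℓ = B →
      (∀ i ≤ ℓ, ccMultiset G (W i) = ccMultiset G A) →
      (∀ i < ℓ, adjCJ G (W i) (W (i + 1))) →
      (comps G A \ comps G B).card ≤ ℓ) := by
  classical
  have hcards : (comps G A).card = (comps G B).card := by
    have h := congrArg Multiset.card hm
    simpa [ccMultiset] using h
  have hKAB : (comps G A \ comps G B).card = (comps G B \ comps G A).card := by
    have h1 := Finset.card_sdiff_add_card_inter (comps G A) (comps G B)
    have h2 := Finset.card_sdiff_add_card_inter (comps G B) (comps G A)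
    rw [Finset.inter_comm] at h2
    omega
  have hinv : comps G A = ((comps G A ∩ comps G B) ∪ (comps G A \ comps G B)) ∪
      ((comps G B \ comps G A) \ (comps G B \ comps G A)) := by
    rw [Finset.sdiff_self, Finset.union_empty]
    ext C
    simp only [Finset.mem_union, Finset.mem_inter, Finset.mem_sdiff]
    tauto
  obtain ⟨W, hW0, hWn, hWadj⟩ := build_lemma s hsA hsB hehf
    ((comps G A \ comps G B).card) (comps G A \ comps G B) (comps G B \ comps G A)
    (Finset.Subset.refl _) (Finset.Subset.refl _) rfl hKAB.symm A hinv
  refine ⟨⟨W, hW0, hWn, ?_, hWadj⟩, ?_⟩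
  · intro i hi
    rw [chain_cc hWadj i hi, hW0]
  · intro ℓ W' h0 hℓ _ hsteps
    have h := chain_bound ℓ W' hsteps
    rwa [h0, hℓ] at h
end
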